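/- For k < β, the k-th moment of the j-th order statistic X_(j) from a sample of size n from the unit-Gompertz distribution equals (α e^(αj) n!)/((j-1)!(n-j)!) · Σ_{r=0}^{n-j} C(n-j, r)(-1)^r e^(rα) (α(j+r))^(k/β - 1) Γ(1 - k/β, α(j+r)). -/

import Mathlib

open MeasureTheory Real Set

private lemma rpow_helper (u : ℝ) (hu : 0 < u) (p q r : ℝ) (A : ℝ) :
    u ^ p * (u ^ q * (A / u ^ r)) = u ^ (p + q - r) * A := by
  rw [Real.rpow_sub hu, Real.rpow_add hu]
  have h := (Real.rpow_pos_of_pos hu r).ne'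
  field_simp

private lemma key (a β k c : ℝ) (ha : 0 < a) (hβ : 0 < β) (hk : k < β) (hc : 0 < c) :
    IntegrableOn (fun x => x ^ k * (a * β * Real.exp (-(c * a) * (1 / x ^ β - 1)) / x ^ (1 + β)))
      (Set.Ioo (0:ℝ) 1) ∧
    ∫ x in Set.Ioo (0:ℝ) 1,
        x ^ k * (a * β * Real.exp (-(c * a) * (1 / x ^ β - 1)) / x ^ (1 + β))
      = a * (a * c) ^ (k / β - 1) * Real.exp (a * c) *
          ∫ s in Set.Ioi (a * c), s ^ ((1 - k / β) - 1) * Real.exp (-s) := by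
  set m : ℝ := a * c with hm_def
  have hm : 0 < m := mul_pos ha hc
  have hβ0 : β ≠ 0 := hβ.ne'
  set ψ : ℝ → ℝ := fun s => (s / m) ^ (-(1 / β)) with hψ_def
  set ψ' : ℝ → ℝ := fun s => -(1 / (β * m)) * (s / m) ^ (-(1 / β) - 1) with hψ'_def
  have hderiv : ∀ s ∈ Set.Ioi m, HasDerivWithinAt ψ (ψ' s) (Set.Ioi m) s := by
    intro s hs
    have hsm : s / m ≠ 0 := (div_pos (hm.trans hs) hm).ne'
    have h1 : HasDerivAt (fun t : ℝ => t ^ (-(1 / β)))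
        (-(1 / β) * (s / m) ^ (-(1 / β) - 1)) (s / m) :=
      Real.hasDerivAt_rpow_const (Or.inl hsm)
    have h2 : HasDerivAt (fun s : ℝ => s / m) (1 / m) s := by
      simpa using (hasDerivAt_id s).div_const m
    have h3 := h1.comp s h2
    have h4 : ψ' s = -(1 / β) * (s / m) ^ (-(1 / β) - 1) * (1 / m) := by
      simp only [hψ'_def]
      field_simp
    rw [h4]
    exact h3.hasDerivWithinAt
  have hinj : Set.InjOn ψ (Set.Ioi m) := by
    intro s1 h1 s2 h2 heq
    have hp1 : (0:ℝ) < s1 / m := div_pos (hm.trans h1) hm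
    have hp2 : (0:ℝ) < s2 / m := div_pos (hm.trans h2) hm
    have h4 : (s1 / m) ^ ((-(1 / β)) * (-β)) = (s2 / m) ^ ((-(1 / β)) * (-β)) := by
      rw [Real.rpow_mul hp1.le, Real.rpow_mul hp2.le]
      simp only [hψ_def] at heq
      rw [heq]
    rw [show (-(1 / β)) * (-β) = 1 by field_simp] at h4
    rw [Real.rpow_one, Real.rpow_one] at h4
    rw [div_eq_div_iff hm.ne' hm.ne'] at h4
    exact mul_right_cancel₀ hm.ne' h4
  have himg : ψ '' Set.Ioi m = Set.Ioo (0:ℝ) 1 := by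
    ext x
    constructor
    · rintro ⟨s, hs, rfl⟩
      have hp : (1:ℝ) < s / m := (one_lt_div hm).mpr hs
      refine ⟨Real.rpow_pos_of_pos (by linarith) _, ?_⟩
      exact Real.rpow_lt_one_of_one_lt_of_neg hp (neg_lt_zero.mpr (by positivity))
    · rintro ⟨hx0, hx1⟩
      refine ⟨m * x ^ (-β), ?_, ?_⟩
      · have h5 : (1:ℝ) < x ^ (-β) :=
          (Real.one_lt_rpow_iff_of_pos hx0).mpr (Or.inr ⟨hx1, by linarith⟩)
        exact (lt_mul_iff_one_lt_right hm).mpr h5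
      · show (m * x ^ (-β) / m) ^ (-(1 / β)) = x
        rw [mul_div_cancel_left₀ _ hm.ne', ← Real.rpow_mul hx0.le,
          show (-β) * -(1 / β) = 1 by field_simp, Real.rpow_one]
  have hpt : ∀ s ∈ Set.Ioi m,
      |ψ' s| * ((ψ s) ^ k * (a * β * Real.exp (-(c * a) * (1 / (ψ s) ^ β - 1)) / (ψ s) ^ (1 + β)))
        = (a * m ^ (k / β - 1) * Real.exp m) * (s ^ ((1 - k / β) - 1) * Real.exp (-s)) := by
    intro s hs
    rw [Set.mem_Ioi] at hs
    have ht : (0:ℝ) < s / m := div_pos (hm.trans hs) hm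
    have epow : ∀ q : ℝ, (ψ s) ^ q = (s / m) ^ (-(1 / β) * q) := by
      intro q
      show ((s / m) ^ (-(1 / β))) ^ q = _
      rw [← Real.rpow_mul ht.le]
    have eβ : (1:ℝ) / (ψ s) ^ β = s / m := by
      rw [epow β, show -(1 / β) * β = -1 by field_simp, Real.rpow_neg_one, one_div, inv_inv]
    have eabs : |ψ' s| = 1 / (β * m) * (s / m) ^ (-(1 / β) - 1) := by
      have : ψ' s = -(1 / (β * m) * (s / m) ^ (-(1 / β) - 1)) := by
        simp only [hψ'_def]; ring
      rw [this, abs_neg, abs_of_pos (by positivity)]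
    rw [eabs, eβ, epow k, epow (1 + β)]
    rw [show -(c * a) * (s / m - 1) = m + -s by rw [hm_def]; field_simp; ring]
    rw [Real.exp_add, mul_assoc, rpow_helper _ ht]
    rw [show -(1 / β) - 1 + -(1 / β) * k - -(1 / β) * (1 + β) = -(k / β) by field_simp; ring]
    rw [Real.div_rpow (hm.trans hs).le hm.le, Real.rpow_neg hm.le,
      show (1 - k / β) - 1 = -(k / β) by ring,
      Real.rpow_sub hm, Real.rpow_one, Real.rpow_neg (hm.trans hs).le]
    have hMk : (0:ℝ) < m ^ (k / β) := Real.rpow_pos_of_pos hm _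
    have hSk : (0:ℝ) < s ^ (k / β) := Real.rpow_pos_of_pos (hm.trans hs) _
    field_simp
  have hint : IntegrableOn
      (fun s => (a * m ^ (k / β - 1) * Real.exp m) * (s ^ ((1 - k / β) - 1) * Real.exp (-s)))
      (Set.Ioi m) := by
    apply Integrable.const_mul
    have h0 : 0 < 1 - k / β := by
      have := (div_lt_one hβ).mpr hk; linarith
    have h1 := (Real.GammaIntegral_convergent h0).mono_set (Set.Ioi_subset_Ioi hm.le)
    exact h1.congr_fun (fun x _ => mul_comm _ _) measurableSet_Ioi
  constructor
  · rw [← himg, integrableOn_image_iff_integrableOn_abs_deriv_smul measurableSet_Ioi hderiv hinj]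
    exact hint.congr_fun (fun s hs => by simpa [smul_eq_mul] using (hpt s hs).symm)
      measurableSet_Ioi
  · rw [← himg, integral_image_eq_integral_abs_deriv_smul measurableSet_Ioi hderiv hinj]
    rw [setIntegral_congr_fun measurableSet_Ioi (fun s hs => by
      simpa [smul_eq_mul] using hpt s hs)]
    rw [MeasureTheory.integral_const_mul]
    congr 1
    refine setIntegral_congr_fun measurableSet_Ioi fun s _ => ?_
    rw [show (1:ℝ) - k / β - 1 = -(k / β) by ring]

noncomputable def incGamma (s x : ℝ) : ℝ := ∫ u in Set.Ioi x, u ^ (s - 1) * Real.exp (-u)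

theorem unitGompertz_order_statistic_moment (α β k : ℝ) (hα : 0 < α) (hβ : 0 < β)
    (hk : k < β) (n j : ℕ) (hj : 1 ≤ j) (hjn : j ≤ n) :
    let f : ℝ → ℝ := fun x => α * β * Real.exp (-α * (1 / x ^ β - 1)) / x ^ (1 + β)
    let F : ℝ → ℝ := fun x => Real.exp (-α * (1 / x ^ β - 1))
    ∫ x in (0:ℝ)..1,
        x ^ k * ((Nat.factorial n : ℝ) / (Nat.factorial (j - 1) * Nat.factorial (n - j)) * f x * F x ^ (j - 1) * (1 - F x) ^ (n - j))
      = α * Real.exp (α * j) * (Nat.factorial n : ℝ) / (Nat.factorial (j - 1) * Nat.factorial (n - j)) *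
          ∑ r ∈ Finset.range (n - j + 1),
            ((n - j).choose r : ℝ) * (-1) ^ r * Real.exp (r * α) *
              (α * (j + r)) ^ (k / β - 1) * incGamma (1 - k / β) (α * (j + r)) := by
  intro f F
  set K : ℝ := (Nat.factorial n : ℝ) / (Nat.factorial (j - 1) * Nat.factorial (n - j)) with hK
  set N : ℕ := n - j with hN
  rw [intervalIntegral.integral_of_le zero_le_one, MeasureTheory.integral_Ioc_eq_integral_Ioo]
  have hbinom : ∀ y : ℝ, (1 - y) ^ N = ∑ r ∈ Finset.range (N + 1),
      (-1 : ℝ) ^ r * y ^ r * (N.choose r) := by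
    intro y
    rw [show (1 : ℝ) - y = -y + 1 by ring, add_pow]
    exact Finset.sum_congr rfl fun r _ => by rw [neg_pow]; ring
  have hptwise : ∀ x ∈ Set.Ioo (0:ℝ) 1,
      x ^ k * (K * f x * F x ^ (j - 1) * (1 - F x) ^ N)
        = ∑ r ∈ Finset.range (N + 1), (K * (N.choose r) * (-1 : ℝ) ^ r) *
            (x ^ k * (α * β * Real.exp (-(((j : ℝ) + r) * α) * (1 / x ^ β - 1)) / x ^ (1 + β))) := by
    intro x _
    rw [hbinom, Finset.mul_sum, Finset.mul_sum]
    refine Finset.sum_congr rfl fun r _ => ?_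
    have hE : F x * (F x ^ (j - 1) * F x ^ r)
        = Real.exp (-(((j : ℝ) + r) * α) * (1 / x ^ β - 1)) := by
      rw [← pow_add, show F x = Real.exp (-α * (1 / x ^ β - 1)) from rfl,
        ← Real.exp_nat_mul, ← Real.exp_add]
      congr 1
      rw [Nat.cast_add, Nat.cast_sub hj]
      push_cast
      ring
    rw [← hE]
    show x ^ k * (K * f x * F x ^ (j - 1) * ((-1:ℝ) ^ r * F x ^ r * (N.choose r))) = _
    rw [show f x = α * β * F x / x ^ (1 + β) from rfl]
    ring
  rw [setIntegral_congr_fun measurableSet_Ioo hptwise]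
  have hjr : ∀ r : ℕ, (0:ℝ) < (j : ℝ) + r := fun r => by
    have : (1:ℝ) ≤ (j:ℝ) := by exact_mod_cast hj
    positivity
  rw [MeasureTheory.integral_finset_sum _ (fun (r : ℕ) _ =>
    ((key α β k ((j : ℝ) + r) hα hβ hk (hjr r)).1.const_mul _))]
  have hterm : ∀ r ∈ Finset.range (N + 1),
      ∫ x in Set.Ioo (0:ℝ) 1, (K * (N.choose r) * (-1 : ℝ) ^ r) *
          (x ^ k * (α * β * Real.exp (-(((j : ℝ) + r) * α) * (1 / x ^ β - 1)) / x ^ (1 + β)))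
        = α * Real.exp (α * j) * K *
            ((N.choose r : ℝ) * (-1) ^ r * Real.exp (r * α) *
              (α * ((j : ℝ) + r)) ^ (k / β - 1) * incGamma (1 - k / β) (α * ((j : ℝ) + r))) := by
    intro r _
    rw [MeasureTheory.integral_const_mul, (key α β k ((j : ℝ) + r) hα hβ hk (hjr r)).2]
    show _ = α * Real.exp (α * j) * K * ((N.choose r : ℝ) * (-1) ^ r * Real.exp (r * α) *
        (α * ((j : ℝ) + r)) ^ (k / β - 1) *
        ∫ u in Set.Ioi (α * ((j:ℝ) + r)), u ^ ((1 - k / β) - 1) * Real.exp (-u))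
    rw [show α * ((j:ℝ) + r) = α * j + r * α by ring, Real.exp_add]
    ring
  rw [Finset.sum_congr rfl hterm, ← Finset.mul_sum]
  push_cast
  ring
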